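/- Let f : Θ → ℝ^d and S : Θ → Sym(d) be continuously differentiable on a compact set Θ ⊂ ℝ^p, with S(θ) positive definite, λ̲·I ⪯ S(θ) ⪯ λ̄·I and ‖f(θ)‖ ≤ M̄ for all θ. Then the map θ ↦ g_θ(x), where g_θ(x) is the Gaussian density with mean f(θ) and precision S(θ) evaluated at x ∈ ℝ^d, is Lipschitz in θ uniformly in x: there is a finite constant C (depending on d, M̄, λ̲, λ̄ and the derivative bounds on Θ) and a function G(x) with polynomial-times-Gaussian decay such that |g_θ(x) − g_θ'(x)| ≤ G(x)·‖θ − θ'‖ for all θ, θ' ∈ Θ and x. -/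

import Mathlib

open Real
open scoped Matrix


-- Helper: sqrt difference bound
lemma aux_sqrt_diff {m a b : ℝ} (hm : 0 < m) (ha : m ≤ a) (hb : m ≤ b) :
    |Real.sqrt a - Real.sqrt b| ≤ |a - b| / (2 * Real.sqrt m) := by
  have key : ∀ u v : ℝ, m ≤ u → m ≤ v → v ≤ u →
      Real.sqrt u - Real.sqrt v ≤ (u - v) / (2 * Real.sqrt m) := by
    intro u v hu hv hvu
    rw [le_div_iff₀ (by positivity)]
    have h1 : Real.sqrt m ≤ Real.sqrt v := Real.sqrt_le_sqrt hv
    have h2 : Real.sqrt v ≤ Real.sqrt u := Real.sqrt_le_sqrt hvu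
    have h3 : Real.sqrt u ^ 2 = u := Real.sq_sqrt (hm.le.trans hu)
    have h4 : Real.sqrt v ^ 2 = v := Real.sq_sqrt (hm.le.trans hv)
    nlinarith [Real.sqrt_nonneg m, Real.sqrt_nonneg u, Real.sqrt_nonneg v]
  rcases le_total b a with h | h
  · rw [abs_of_nonneg (by nlinarith [Real.sqrt_le_sqrt h] : (0:ℝ) ≤ Real.sqrt a - Real.sqrt b),
      abs_of_nonneg (by linarith : (0:ℝ) ≤ a - b)]
    exact key a b ha hb h
  · rw [abs_of_nonpos (by nlinarith [Real.sqrt_le_sqrt h] : Real.sqrt a - Real.sqrt b ≤ 0),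
      abs_of_nonpos (by linarith : a - b ≤ 0)]
    rw [neg_sub, neg_sub]
    exact key b a hb ha h

-- Helper: exp difference bound
lemma aux_exp_diff (a b : ℝ) :
    |Real.exp (-a) - Real.exp (-b)| ≤ max (Real.exp (-a)) (Real.exp (-b)) * |a - b| := by
  have key : ∀ u v : ℝ, u ≤ v →
      Real.exp (-u) - Real.exp (-v) ≤ Real.exp (-u) * (v - u) := by
    intro u v huv
    have hv : Real.exp (-v) = Real.exp (-u) * Real.exp (u - v) := by
      rw [← Real.exp_add]; ring_nf
    nlinarith [Real.add_one_le_exp (u - v), Real.exp_pos (-u)]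
  rcases le_total a b with h | h
  · rw [abs_of_nonneg (by nlinarith [Real.exp_le_exp.2 (neg_le_neg h)] :
        (0:ℝ) ≤ Real.exp (-a) - Real.exp (-b)),
      abs_of_nonpos (by linarith : a - b ≤ 0)]
    calc Real.exp (-a) - Real.exp (-b) ≤ Real.exp (-a) * (b - a) := key a b h
      _ ≤ max (Real.exp (-a)) (Real.exp (-b)) * -(a - b) := by
          have := le_max_left (Real.exp (-a)) (Real.exp (-b))
          nlinarith
  · rw [abs_of_nonpos (by nlinarith [Real.exp_le_exp.2 (neg_le_neg h)] :
        Real.exp (-a) - Real.exp (-b) ≤ 0),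
      abs_of_nonneg (by linarith : (0:ℝ) ≤ a - b)]
    calc -(Real.exp (-a) - Real.exp (-b)) ≤ Real.exp (-b) * (a - b) := by
          have := key b a h; linarith
      _ ≤ max (Real.exp (-a)) (Real.exp (-b)) * (a - b) := by
          have := le_max_right (Real.exp (-a)) (Real.exp (-b))
          nlinarith [Real.exp_pos (-b)]

-- Lipschitz bound on a compact convex set for C¹ functions
lemma aux_lip {n : ℕ} {F : Type*} [NormedAddCommGroup F] [NormedSpace ℝ F]
    {g : (Fin n → ℝ) → F} (hg : ContDiff ℝ 1 g) {K : Set (Fin n → ℝ)}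
    (hK : IsCompact K) (hconv : Convex ℝ K) :
    ∃ L : ℝ, 0 ≤ L ∧ ∀ a ∈ K, ∀ b ∈ K, ‖g a - g b‖ ≤ L * ‖a - b‖ := by
  obtain ⟨C, hC⟩ := hK.exists_bound_of_continuousOn
    ((hg.continuous_fderiv one_ne_zero).continuousOn)
  refine ⟨max C 0, le_max_right _ _, fun a ha b hb => ?_⟩
  exact hconv.norm_image_sub_le_of_norm_fderiv_le (f := g) (C := max C 0)
    (fun x _ => hg.differentiable one_ne_zero x)
    (fun x hx => (hC x hx).trans (le_max_left _ _)) hb ha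

-- quadratic form lower bound from PosSemidef (S - m•1)
lemma aux_quad {d : ℕ} {M : Matrix (Fin d) (Fin d) ℝ} {m : ℝ}
    (h : (M - m • (1 : Matrix (Fin d) (Fin d) ℝ)).PosSemidef) (v : Fin d → ℝ) :
    m * ∑ i, v i ^ 2 ≤ v ⬝ᵥ (M *ᵥ v) := by
  have h2 := h.dotProduct_mulVec_nonneg v
  have hstar : star v = v := by
    funext i; simp
  rw [hstar, Matrix.sub_mulVec, dotProduct_sub] at h2
  have h3 : v ⬝ᵥ ((m • (1 : Matrix (Fin d) (Fin d) ℝ)) *ᵥ v) = m * ∑ i, v i ^ 2 := by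
    rw [Matrix.smul_mulVec, Matrix.one_mulVec, dotProduct_smul]
    simp [dotProduct, pow_two, Finset.mul_sum]
  rw [h3] at h2
  linarith

lemma aux_quad' {d : ℕ} {M : Matrix (Fin d) (Fin d) ℝ} {m : ℝ}
    (h : (M - m • (1 : Matrix (Fin d) (Fin d) ℝ)).PosSemidef) (v : Fin d → ℝ) :
    m * ∑ i, v i ^ 2 ≤ v ⬝ᵥ (M *ᵥ v) := by
  have h2 := h.dotProduct_mulVec_nonneg v
  have hstar : star v = v := by funext i; simp
  rw [hstar, Matrix.sub_mulVec, dotProduct_sub] at h2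
  have h3 : v ⬝ᵥ ((m • (1 : Matrix (Fin d) (Fin d) ℝ)) *ᵥ v) = m * ∑ i, v i ^ 2 := by
    rw [Matrix.smul_mulVec, Matrix.one_mulVec, dotProduct_smul]
    simp [dotProduct, pow_two, Finset.mul_sum]
  rw [h3] at h2
  linarith

lemma aux_det_ge {d : ℕ} {M : Matrix (Fin d) (Fin d) ℝ} {m : ℝ} (hm : 0 < m)
    (hH : M.IsHermitian)
    (h : (M - m • (1 : Matrix (Fin d) (Fin d) ℝ)).PosSemidef) :
    m ^ d ≤ M.det := by
  have heig : ∀ i, m ≤ hH.eigenvalues i := by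
    intro i
    have hval := hH.eigenvalues_eq i
    set v : Fin d → ℝ := ⇑(hH.eigenvectorBasis i) with hv
    have hnorm : ‖hH.eigenvectorBasis i‖ = 1 := hH.eigenvectorBasis.orthonormal.1 i
    have hvv : ∑ j, v j ^ 2 = 1 := by
      have := congrArg (· ^ 2) hnorm
      rw [EuclideanSpace.norm_eq] at this
      simp only [Real.sq_sqrt (by positivity : (0:ℝ) ≤ ∑ j, ‖(hH.eigenvectorBasis i) j‖ ^ 2)] at this
      simpa [Real.norm_eq_abs, sq_abs] using this
    have hq := aux_quad' h v
    rw [hvv, mul_one] at hq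
    have hstar : star v = v := by funext j; simp
    rw [hstar] at hval
    simp only [RCLike.re_to_real] at hval
    linarith [hval ▸ hq]
  rw [hH.det_eq_prod_eigenvalues]
  calc m ^ d = ∏ _i : Fin d, m := by simp
    _ ≤ ∏ i, hH.eigenvalues i :=
      Finset.prod_le_prod (fun _ _ => hm.le) (fun i _ => heig i)

lemma aux_isHermitian {d : ℕ} {M : Matrix (Fin d) (Fin d) ℝ} (h : M.IsSymm) :
    M.IsHermitian := by
  rw [Matrix.IsHermitian]
  ext i j
  simp [Matrix.conjTranspose_apply, ← Matrix.IsSymm.apply h j i]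

-- difference of quadratic forms
lemma aux_qdiff {d : ℕ} (a a' : Fin d → ℝ) (M M' : Matrix (Fin d) (Fin d) ℝ)
    {da ds bs ba : ℝ} (hda : 0 ≤ da) (hds : 0 ≤ ds) (hbs : 0 ≤ bs) (hba : 0 ≤ ba)
    (h1 : ∀ i, |a i - a' i| ≤ da) (h2 : ∀ i j, |M i j - M' i j| ≤ ds)
    (h3 : ∀ i j, |M i j| ≤ bs) (h3' : ∀ i j, |M' i j| ≤ bs)
    (h4 : ∀ i, |a i| ≤ ba) (h4' : ∀ i, |a' i| ≤ ba) :
    |(∑ i, ∑ j, a i * M i j * a j) - ∑ i, ∑ j, a' i * M' i j * a' j| ≤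
      (d : ℝ) ^ 2 * (2 * da * bs * ba + ds * ba ^ 2) := by
  have key : ∀ i j, |a i * M i j * a j - a' i * M' i j * a' j| ≤
      2 * da * bs * ba + ds * ba ^ 2 := by
    intro i j
    have hid : a i * M i j * a j - a' i * M' i j * a' j =
        (a i - a' i) * M i j * a j + a' i * ((M i j - M' i j) * a j)
          + a' i * (M' i j * (a j - a' j)) := by ring
    rw [hid]
    calc |(a i - a' i) * M i j * a j + a' i * ((M i j - M' i j) * a j)
          + a' i * (M' i j * (a j - a' j))|
        ≤ |(a i - a' i) * M i j * a j| + |a' i * ((M i j - M' i j) * a j)|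
          + |a' i * (M' i j * (a j - a' j))| := abs_add_three _ _ _
      _ ≤ da * bs * ba + ba * (ds * ba) + ba * (bs * da) := by
          gcongr
          · rw [abs_mul, abs_mul]
            gcongr <;> [exact h1 i; exact h3 i j; exact h4 j]
          · rw [abs_mul, abs_mul]
            gcongr <;> [exact h4' i; exact h2 i j; exact h4 j]
          · rw [abs_mul, abs_mul]
            gcongr <;> [exact h4' i; exact h3' i j; exact h1 j]
      _ ≤ 2 * da * bs * ba + ds * ba ^ 2 := by ring_nf; nlinarith
  rw [← Finset.sum_sub_distrib]
  simp_rw [← Finset.sum_sub_distrib]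
  calc |∑ i, ∑ j, (a i * M i j * a j - a' i * M' i j * a' j)|
      ≤ ∑ i, |∑ j, (a i * M i j * a j - a' i * M' i j * a' j)| :=
        Finset.abs_sum_le_sum_abs _ _
    _ ≤ ∑ _i : Fin d, ∑ _j : Fin d, (2 * da * bs * ba + ds * ba ^ 2) := by
        refine Finset.sum_le_sum fun i _ => ?_
        exact (Finset.abs_sum_le_sum_abs _ _).trans
          (Finset.sum_le_sum fun j _ => key i j)
    _ = (d : ℝ) ^ 2 * (2 * da * bs * ba + ds * ba ^ 2) := by
        simp [Finset.sum_const]; ring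

-- ContDiff of det ∘ S
lemma aux_det_contDiff {p d : ℕ} (S : (Fin p → ℝ) → Matrix (Fin d) (Fin d) ℝ)
    (hS : ContDiff ℝ 1 fun θ => (fun i j => S θ i j : Fin d → Fin d → ℝ)) :
    ContDiff ℝ 1 fun θ => (S θ).det := by
  have hentry : ∀ i j, ContDiff ℝ 1 fun θ => S θ i j := fun i j =>
    contDiff_pi.1 (contDiff_pi.1 hS i) j
  have : (fun θ => (S θ).det) =
      fun θ => ∑ σ : Equiv.Perm (Fin d),
        ((Equiv.Perm.sign σ : ℤ) : ℝ) * ∏ i, S θ (σ i) i :=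
    funext fun θ => Matrix.det_apply' _
  rw [this]
  exact ContDiff.sum fun σ _ =>
    contDiff_const.mul (contDiff_prod fun i _ => hentry (σ i) i)


lemma aux_entry_le {d : ℕ} (M : Fin d → Fin d → ℝ) (i j : Fin d) : |M i j| ≤ ‖M‖ :=
  le_trans (norm_le_pi_norm (M i) j) (norm_le_pi_norm M i)

set_option maxHeartbeats 2000000 in
theorem stmt_16 (d p : ℕ) (Θ : Set (Fin p → ℝ)) (hΘ : IsCompact Θ)
    (f : (Fin p → ℝ) → Fin d → ℝ)
    (S : (Fin p → ℝ) → Matrix (Fin d) (Fin d) ℝ)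
    (hf : ContDiff ℝ 1 f)
    (hS : ContDiff ℝ 1 fun θ => (fun i j => S θ i j : Fin d → Fin d → ℝ))
    (Mbar lml lmu : ℝ) (hl : 0 < lml)
    (hmean : ∀ θ ∈ Θ, Real.sqrt (∑ i, f θ i ^ 2) ≤ Mbar)
    (hsym : ∀ θ ∈ Θ, (S θ).IsSymm)
    (hlow : ∀ θ ∈ Θ, (S θ - lml • (1 : Matrix (Fin d) (Fin d) ℝ)).PosSemidef)
    (hup : ∀ θ ∈ Θ, (lmu • (1 : Matrix (Fin d) (Fin d) ℝ) - S θ).PosSemidef) :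
    ∃ G : (Fin d → ℝ) → ℝ,
      (∀ x, 0 ≤ G x) ∧
      (∃ (C : ℝ) (k : ℕ) (c : ℝ), 0 < c ∧ ∀ x,
        G x ≤ C * (1 + Real.sqrt (∑ i, x i ^ 2)) ^ k * Real.exp (-c * ∑ i, x i ^ 2)) ∧
      ∀ θ ∈ Θ, ∀ θ' ∈ Θ, ∀ x : Fin d → ℝ,
        |Real.sqrt (S θ).det * (2 * Real.pi) ^ (-(d : ℝ) / 2) *
            Real.exp (-(∑ i, ∑ j, (x i - f θ i) * S θ i j * (x j - f θ j)) / 2) -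
          Real.sqrt (S θ').det * (2 * Real.pi) ^ (-(d : ℝ) / 2) *
            Real.exp (-(∑ i, ∑ j, (x i - f θ' i) * S θ' i j * (x j - f θ' j)) / 2)| ≤
        G x * Real.sqrt (∑ j, (θ j - θ' j) ^ 2) := by
  rcases Set.eq_empty_or_nonempty Θ with hempty | ⟨θ0, hθ0⟩
  · exact ⟨fun _ => 0, fun _ => le_refl 0,
      ⟨0, 0, 1, one_pos, fun x => by simp⟩, by simp [hempty]⟩
  -- basic nonnegativity
  have hM0 : 0 ≤ Mbar := le_trans (Real.sqrt_nonneg _) (hmean θ0 hθ0)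
  -- compact convex superset
  obtain ⟨R, hR⟩ := hΘ.isBounded.subset_closedBall 0
  have hKc : IsCompact (Metric.closedBall (0 : Fin p → ℝ) R) := isCompact_closedBall _ _
  have hKconv : Convex ℝ (Metric.closedBall (0 : Fin p → ℝ) R) := convex_closedBall _ _
  obtain ⟨Lf, hLf0, hLf⟩ := aux_lip hf hKc hKconv
  obtain ⟨LS, hLS0, hLS⟩ := aux_lip hS hKc hKconv
  obtain ⟨LD, hLD0, hLD⟩ := aux_lip (aux_det_contDiff S hS) hKc hKconv
  -- entrywise bound on S over Θ
  obtain ⟨BS0, hBS0⟩ := hΘ.exists_bound_of_continuousOn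
    ((hS.continuous).continuousOn)
  set BS : ℝ := max BS0 0 with hBSdef
  have hBSnn : 0 ≤ BS := le_max_right _ _
  have hBS : ∀ θ ∈ Θ, ∀ i j, |S θ i j| ≤ BS := fun θ hθ i j =>
    (aux_entry_le (fun i j => S θ i j) i j).trans ((hBS0 θ hθ).trans (le_max_left _ _))
  -- det bounds over Θ
  obtain ⟨BD0, hBD0⟩ := hΘ.exists_bound_of_continuousOn
    ((aux_det_contDiff S hS).continuous.continuousOn)
  set BD : ℝ := max BD0 0 with hBDdef
  have hBDnn : 0 ≤ BD := le_max_right _ _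
  have hBD : ∀ θ ∈ Θ, (S θ).det ≤ BD := fun θ hθ =>
    (le_abs_self _).trans ((hBD0 θ hθ).trans (le_max_left _ _))
  have hdetlow : ∀ θ ∈ Θ, lml ^ d ≤ (S θ).det := fun θ hθ =>
    aux_det_ge hl (aux_isHermitian (hsym θ hθ)) (hlow θ hθ)
  have hld : (0:ℝ) < lml ^ d := pow_pos hl d
  -- constants
  set c2 : ℝ := (2 * Real.pi) ^ (-(d:ℝ)/2) with hc2def
  have hc2 : 0 < c2 := Real.rpow_pos_of_pos (by positivity) _
  set CE : ℝ := Real.exp (lml * Mbar ^ 2 / 2) with hCEdef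
  have hCE : 0 < CE := Real.exp_pos _
  set CQ : ℝ := 2 * Lf * BS * (1 + Mbar) + LS * (1 + Mbar) ^ 2 with hCQdef
  have hCQnn : 0 ≤ CQ := by
    have h1 : (0:ℝ) ≤ 1 + Mbar := by linarith
    have h2 : (0:ℝ) ≤ 2 * Lf * BS * (1 + Mbar) := by positivity
    have h3 : (0:ℝ) ≤ LS * (1 + Mbar) ^ 2 := by positivity
    linarith
  set LA : ℝ := c2 * LD / (2 * Real.sqrt (lml ^ d)) with hLAdef
  have hLAnn : 0 ≤ LA := by positivity
  set Cfin : ℝ := Real.sqrt BD * c2 * (CE * ((d:ℝ)^2 * CQ)) / 2 + LA * CE with hCfindef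
  have hCfinnn : 0 ≤ Cfin := by positivity
  refine ⟨fun x => Cfin * (1 + Real.sqrt (∑ i, x i ^ 2)) ^ 2 *
      Real.exp (-(lml/4) * ∑ i, x i ^ 2), fun x => by positivity,
    ⟨Cfin, 2, lml/4, by positivity, fun x => le_refl _⟩, ?_⟩
  intro θ hθ θ' hθ' x
  -- abbreviations
  set nθ : ℝ := Real.sqrt (∑ j, (θ j - θ' j) ^ 2) with hnθdef
  set nx : ℝ := Real.sqrt (∑ i, x i ^ 2) with hnxdef
  have hnθ0 : 0 ≤ nθ := Real.sqrt_nonneg _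
  have hnx0 : 0 ≤ nx := Real.sqrt_nonneg _
  have hθK : θ ∈ Metric.closedBall (0 : Fin p → ℝ) R := hR hθ
  have hθ'K : θ' ∈ Metric.closedBall (0 : Fin p → ℝ) R := hR hθ'
  -- sup norm vs euclidean norm
  have hsupθ : ‖θ - θ'‖ ≤ nθ := by
    rw [pi_norm_le_iff_of_nonneg hnθ0]
    intro j
    rw [Pi.sub_apply, Real.norm_eq_abs, ← Real.sqrt_sq_eq_abs]
    exact Real.sqrt_le_sqrt (Finset.single_le_sum
      (fun i _ => sq_nonneg (θ i - θ' i)) (Finset.mem_univ j))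
  -- componentwise Lipschitz bounds
  have hfc : ∀ i, |f θ i - f θ' i| ≤ Lf * nθ := by
    intro i
    calc |f θ i - f θ' i| = ‖(f θ - f θ') i‖ := by rw [Pi.sub_apply, Real.norm_eq_abs]
      _ ≤ ‖f θ - f θ'‖ := norm_le_pi_norm _ i
      _ ≤ Lf * ‖θ - θ'‖ := hLf θ hθK θ' hθ'K
      _ ≤ Lf * nθ := mul_le_mul_of_nonneg_left hsupθ hLf0
  have hSc : ∀ i j, |S θ i j - S θ' i j| ≤ LS * nθ := by
    intro i j
    have h0 := aux_entry_le ((fun i j => S θ i j) - (fun i j => S θ' i j) :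
      Fin d → Fin d → ℝ) i j
    simp only [Pi.sub_apply] at h0
    exact h0.trans (((hLS θ hθK θ' hθ'K)).trans (mul_le_mul_of_nonneg_left hsupθ hLS0))
  have hdc : |(S θ).det - (S θ').det| ≤ LD * nθ := by
    calc |(S θ).det - (S θ').det| = ‖(S θ).det - (S θ').det‖ := (Real.norm_eq_abs _).symm
      _ ≤ LD * ‖θ - θ'‖ := hLD θ hθK θ' hθ'K
      _ ≤ LD * nθ := mul_le_mul_of_nonneg_left hsupθ hLD0
  -- componentwise bounds on x and f
  have hxc : ∀ i, |x i| ≤ nx := by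
    intro i
    rw [← Real.sqrt_sq_eq_abs]
    exact Real.sqrt_le_sqrt (Finset.single_le_sum
      (fun i _ => sq_nonneg (x i)) (Finset.mem_univ i))
  have hfa : ∀ ϑ, ϑ ∈ Θ → ∀ i, |f ϑ i| ≤ Mbar := by
    intro ϑ hϑ i
    rw [← Real.sqrt_sq_eq_abs]
    exact (Real.sqrt_le_sqrt (Finset.single_le_sum
      (fun i _ => sq_nonneg (f ϑ i)) (Finset.mem_univ i))).trans (hmean ϑ hϑ)
  have hba : (0:ℝ) ≤ (1 + Mbar) * (1 + nx) := by nlinarith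
  have haθ : ∀ i, |x i - f θ i| ≤ (1 + Mbar) * (1 + nx) := by
    intro i
    have := abs_sub (x i) (f θ i)
    have h1 := hxc i; have h2 := hfa θ hθ i
    have : |x i - f θ i| ≤ |x i| + |f θ i| := abs_sub _ _
    nlinarith
  have haθ' : ∀ i, |x i - f θ' i| ≤ (1 + Mbar) * (1 + nx) := by
    intro i
    have h1 := hxc i; have h2 := hfa θ' hθ' i
    have : |x i - f θ' i| ≤ |x i| + |f θ' i| := abs_sub _ _
    nlinarith
  -- quadratic form difference
  have hadiff : ∀ i, |(x i - f θ i) - (x i - f θ' i)| ≤ Lf * nθ := by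
    intro i
    have e : (x i - f θ i) - (x i - f θ' i) = f θ' i - f θ i := by ring
    rw [e, abs_sub_comm]
    exact hfc i
  have hQd := aux_qdiff (fun i => x i - f θ i) (fun i => x i - f θ' i) (S θ) (S θ')
    (mul_nonneg hLf0 hnθ0) (mul_nonneg hLS0 hnθ0) hBSnn hba
    hadiff (fun i j => hSc i j) (fun i j => hBS θ hθ i j) (fun i j => hBS θ' hθ' i j)
    haθ haθ'
  have hQd2 : |(∑ i, ∑ j, (x i - f θ i) * S θ i j * (x j - f θ j)) -
      ∑ i, ∑ j, (x i - f θ' i) * S θ' i j * (x j - f θ' j)| ≤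
      (d:ℝ)^2 * CQ * (1 + nx)^2 * nθ := by
    refine hQd.trans ?_
    have h1 : (1 + nx) ≤ (1 + nx)^2 := by nlinarith
    have step : 2 * (Lf * nθ) * BS * ((1 + Mbar) * (1 + nx)) +
        (LS * nθ) * ((1 + Mbar) * (1 + nx)) ^ 2 ≤ CQ * (1 + nx)^2 * nθ := by
      have e1 : 2 * (Lf * nθ) * BS * ((1 + Mbar) * (1 + nx)) =
          (2 * Lf * BS * (1 + Mbar)) * (1 + nx) * nθ := by ring
      have e2 : (LS * nθ) * ((1 + Mbar) * (1 + nx)) ^ 2 =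
          (LS * (1 + Mbar)^2) * (1 + nx)^2 * nθ := by ring
      rw [e1, e2, hCQdef]
      have hnn : (0:ℝ) ≤ 2 * Lf * BS * (1 + Mbar) := by positivity
      have h2 : (2 * Lf * BS * (1 + Mbar)) * (1 + nx) * nθ ≤
          (2 * Lf * BS * (1 + Mbar)) * (1 + nx)^2 * nθ :=
        mul_le_mul_of_nonneg_right (mul_le_mul_of_nonneg_left h1 hnn) hnθ0
      nlinarith [h2]
    calc (d:ℝ)^2 * (2 * (Lf * nθ) * BS * ((1 + Mbar) * (1 + nx)) +
          (LS * nθ) * ((1 + Mbar) * (1 + nx)) ^ 2)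
        ≤ (d:ℝ)^2 * (CQ * (1 + nx)^2 * nθ) := by
          apply mul_le_mul_of_nonneg_left step (by positivity)
      _ = (d:ℝ)^2 * CQ * (1 + nx)^2 * nθ := by ring
  -- quadratic form lower bound / gaussian upper bound
  have hquad : ∀ ϑ, ϑ ∈ Θ →
      Real.exp (-(∑ i, ∑ j, (x i - f ϑ i) * S ϑ i j * (x j - f ϑ j)) / 2) ≤
      CE * Real.exp (-(lml/4) * ∑ i, x i ^ 2) := by
    intro ϑ hϑ
    have hq := aux_quad' (hlow ϑ hϑ) (fun i => x i - f ϑ i)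
    have hdp : (fun i => x i - f ϑ i) ⬝ᵥ (S ϑ *ᵥ fun i => x i - f ϑ i) =
        ∑ i, ∑ j, (x i - f ϑ i) * S ϑ i j * (x j - f ϑ j) := by
      simp [dotProduct, Matrix.mulVec, Finset.mul_sum, mul_assoc]
    rw [hdp] at hq
    have hf2 : ∑ i, f ϑ i ^ 2 ≤ Mbar ^ 2 := by
      have hs0 : (0:ℝ) ≤ ∑ i, f ϑ i ^ 2 := by positivity
      nlinarith [Real.sq_sqrt hs0, Real.sqrt_nonneg (∑ i, f ϑ i ^ 2), hmean ϑ hϑ]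
    have hsum : (∑ i, x i ^ 2) / 2 - Mbar ^ 2 ≤ ∑ i, (x i - f ϑ i) ^ 2 := by
      have hterm : ∀ i : Fin d, x i ^ 2 / 2 - f ϑ i ^ 2 ≤ (x i - f ϑ i) ^ 2 := by
        intro i; nlinarith [sq_nonneg (x i - 2 * f ϑ i)]
      calc (∑ i, x i ^ 2) / 2 - Mbar ^ 2 ≤ (∑ i, x i ^ 2) / 2 - ∑ i, f ϑ i ^ 2 := by linarith
        _ = ∑ i, (x i ^ 2 / 2 - f ϑ i ^ 2) := by
            rw [Finset.sum_sub_distrib, Finset.sum_div]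
        _ ≤ ∑ i, (x i - f ϑ i) ^ 2 := Finset.sum_le_sum fun i _ => hterm i
    have harg : -(∑ i, ∑ j, (x i - f ϑ i) * S ϑ i j * (x j - f ϑ j)) / 2 ≤
        lml * Mbar ^ 2 / 2 + (-(lml/4) * ∑ i, x i ^ 2) := by
      have h5 : lml * ((∑ i, x i ^ 2) / 2 - Mbar ^ 2) ≤
          lml * ∑ i, (x i - f ϑ i) ^ 2 := mul_le_mul_of_nonneg_left hsum hl.le
      linarith [hq, h5]
    calc Real.exp (-(∑ i, ∑ j, (x i - f ϑ i) * S ϑ i j * (x j - f ϑ j)) / 2)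
        ≤ Real.exp (lml * Mbar ^ 2 / 2 + (-(lml/4) * ∑ i, x i ^ 2)) := Real.exp_le_exp.2 harg
      _ = CE * Real.exp (-(lml/4) * ∑ i, x i ^ 2) := by rw [Real.exp_add]
  -- exponential difference bound
  have hediff : |Real.exp (-(∑ i, ∑ j, (x i - f θ i) * S θ i j * (x j - f θ j)) / 2) -
      Real.exp (-(∑ i, ∑ j, (x i - f θ' i) * S θ' i j * (x j - f θ' j)) / 2)| ≤
      (CE * Real.exp (-(lml/4) * ∑ i, x i ^ 2)) * (((d:ℝ)^2 * CQ * (1 + nx)^2 * nθ) / 2) := by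
    have h := aux_exp_diff ((∑ i, ∑ j, (x i - f θ i) * S θ i j * (x j - f θ j)) / 2)
      ((∑ i, ∑ j, (x i - f θ' i) * S θ' i j * (x j - f θ' j)) / 2)
    rw [neg_div, neg_div]
    refine h.trans ?_
    rw [← neg_div, ← neg_div]
    have hmax : max (Real.exp (-(∑ i, ∑ j, (x i - f θ i) * S θ i j * (x j - f θ j)) / 2))
        (Real.exp (-(∑ i, ∑ j, (x i - f θ' i) * S θ' i j * (x j - f θ' j)) / 2)) ≤
        CE * Real.exp (-(lml/4) * ∑ i, x i ^ 2) :=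
      max_le (hquad θ hθ) (hquad θ' hθ')
    have habs : |(∑ i, ∑ j, (x i - f θ i) * S θ i j * (x j - f θ j)) / 2 -
        (∑ i, ∑ j, (x i - f θ' i) * S θ' i j * (x j - f θ' j)) / 2| =
        |(∑ i, ∑ j, (x i - f θ i) * S θ i j * (x j - f θ j)) -
        ∑ i, ∑ j, (x i - f θ' i) * S θ' i j * (x j - f θ' j)| / 2 := by
      rw [div_sub_div_same, abs_div]
      norm_num
    rw [habs]
    refine mul_le_mul hmax ?_ (by positivity) (by positivity)
    exact div_le_div_of_nonneg_right hQd2 (by norm_num)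
  -- amplitude bounds
  have hA0 : 0 ≤ Real.sqrt (S θ).det * c2 := by positivity
  have hE'0 : (0:ℝ) ≤ Real.exp (-(∑ i, ∑ j, (x i - f θ' i) * S θ' i j * (x j - f θ' j)) / 2) :=
    (Real.exp_pos _).le
  have hAbound : Real.sqrt (S θ).det * c2 ≤ Real.sqrt BD * c2 :=
    mul_le_mul_of_nonneg_right (Real.sqrt_le_sqrt (hBD θ hθ)) hc2.le
  have hAdiff : |Real.sqrt (S θ).det * c2 - Real.sqrt (S θ').det * c2| ≤ LA * nθ := by
    have h1 : |Real.sqrt (S θ).det - Real.sqrt (S θ').det| ≤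
        |(S θ).det - (S θ').det| / (2 * Real.sqrt (lml ^ d)) :=
      aux_sqrt_diff hld (hdetlow θ hθ) (hdetlow θ' hθ')
    have hden : (0:ℝ) < 2 * Real.sqrt (lml ^ d) := by positivity
    calc |Real.sqrt (S θ).det * c2 - Real.sqrt (S θ').det * c2|
        = |Real.sqrt (S θ).det - Real.sqrt (S θ').det| * c2 := by
          rw [← sub_mul, abs_mul, abs_of_nonneg hc2.le]
      _ ≤ (|(S θ).det - (S θ').det| / (2 * Real.sqrt (lml ^ d))) * c2 :=
          mul_le_mul_of_nonneg_right h1 hc2.le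
      _ ≤ ((LD * nθ) / (2 * Real.sqrt (lml ^ d))) * c2 :=
          mul_le_mul_of_nonneg_right (div_le_div_of_nonneg_right hdc hden.le) hc2.le
      _ = LA * nθ := by rw [hLAdef]; ring
  have h1x : (1:ℝ) ≤ (1 + nx)^2 := by nlinarith
  calc |Real.sqrt (S θ).det * c2 *
          Real.exp (-(∑ i, ∑ j, (x i - f θ i) * S θ i j * (x j - f θ j)) / 2) -
        Real.sqrt (S θ').det * c2 *
          Real.exp (-(∑ i, ∑ j, (x i - f θ' i) * S θ' i j * (x j - f θ' j)) / 2)|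
      ≤ (Real.sqrt (S θ).det * c2) *
          |Real.exp (-(∑ i, ∑ j, (x i - f θ i) * S θ i j * (x j - f θ j)) / 2) -
           Real.exp (-(∑ i, ∑ j, (x i - f θ' i) * S θ' i j * (x j - f θ' j)) / 2)| +
        |Real.sqrt (S θ).det * c2 - Real.sqrt (S θ').det * c2| *
          Real.exp (-(∑ i, ∑ j, (x i - f θ' i) * S θ' i j * (x j - f θ' j)) / 2) := by
        have hid : Real.sqrt (S θ).det * c2 *
            Real.exp (-(∑ i, ∑ j, (x i - f θ i) * S θ i j * (x j - f θ j)) / 2) -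
          Real.sqrt (S θ').det * c2 *
            Real.exp (-(∑ i, ∑ j, (x i - f θ' i) * S θ' i j * (x j - f θ' j)) / 2) =
          (Real.sqrt (S θ).det * c2) *
            (Real.exp (-(∑ i, ∑ j, (x i - f θ i) * S θ i j * (x j - f θ j)) / 2) -
             Real.exp (-(∑ i, ∑ j, (x i - f θ' i) * S θ' i j * (x j - f θ' j)) / 2)) +
          (Real.sqrt (S θ).det * c2 - Real.sqrt (S θ').det * c2) *
            Real.exp (-(∑ i, ∑ j, (x i - f θ' i) * S θ' i j * (x j - f θ' j)) / 2) := by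
          ring
        rw [hid]
        refine (abs_add_le _ _).trans ?_
        rw [abs_mul, abs_of_nonneg hA0, abs_mul, abs_of_nonneg hE'0]
    _ ≤ (Real.sqrt BD * c2) *
          ((CE * Real.exp (-(lml/4) * ∑ i, x i ^ 2)) *
            (((d:ℝ)^2 * CQ * (1 + nx)^2 * nθ) / 2)) +
        (LA * nθ) * (CE * Real.exp (-(lml/4) * ∑ i, x i ^ 2)) :=
        add_le_add
          (mul_le_mul hAbound hediff (abs_nonneg _) (by positivity))
          (mul_le_mul hAdiff (hquad θ' hθ') hE'0 (by positivity))
    _ ≤ (Real.sqrt BD * c2) *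
          ((CE * Real.exp (-(lml/4) * ∑ i, x i ^ 2)) *
            (((d:ℝ)^2 * CQ * (1 + nx)^2 * nθ) / 2)) +
        ((LA * nθ) * (CE * Real.exp (-(lml/4) * ∑ i, x i ^ 2))) * (1 + nx)^2 := by
        have ht : (0:ℝ) ≤ (LA * nθ) * (CE * Real.exp (-(lml/4) * ∑ i, x i ^ 2)) := by
          positivity
        have := le_mul_of_one_le_right ht h1x
        linarith
    _ = Cfin * (1 + nx) ^ 2 * Real.exp (-(lml/4) * ∑ i, x i ^ 2) * nθ := by
        rw [hCfindef]; ring
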